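/- The sequence n·α_n converges to 4 as n → ∞, where α_n = Σ_{q=1}^{n-1} 2^{min(q,n-q)}/C(n,q). In other words, α_n is asymptotically equivalent to 4/n. -/

import Mathlib

open Finset

noncomputable def alpha (n : ℕ) : ℝ :=
  ∑ q ∈ Finset.Icc 1 (n - 1), (2 : ℝ) ^ (min q (n - q)) / (Nat.choose n q : ℝ)

-- exponential beats cubic
lemma exp_beats_cube : ∀ m : ℕ, 40 ≤ m → 64 * (m:ℝ)^3 ≤ (3/2)^m := by
  intro m hm
  induction m, hm using Nat.le_induction with
  | base =>
    norm_num
  | succ m hm ih =>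
    push_cast
    have hm0 : (0:ℝ) < m := by positivity
    have h1 : ((m:ℝ)+1)^3 ≤ (3/2) * (m:ℝ)^3 := by
      have h8 : (8:ℝ) ≤ (m:ℝ) := by exact_mod_cast le_trans (by norm_num) hm
      nlinarith [sq_nonneg ((m:ℝ) - 8)]
    calc 64 * ((m:ℝ)+1)^3 ≤ (3/2) * (64 * (m:ℝ)^3) := by nlinarith
      _ ≤ (3/2) * (3/2)^m := by nlinarith [pow_pos (show (0:ℝ) < 3/2 by norm_num) m]
      _ = (3/2)^(m+1) := by ring
  
-- central binomial lower bound transported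
lemma four_pow_le (m n : ℕ) (hm : 0 < m) (h : 2*m ≤ n) : 4^m ≤ n * n.choose m := by
  calc 4^m ≤ 2*m * Nat.centralBinom m := Nat.four_pow_le_two_mul_self_mul_centralBinom m hm
    _ = 2*m * (2*m).choose m := by rw [Nat.centralBinom_eq_two_mul_choose]
    _ ≤ n * n.choose m := Nat.mul_le_mul h (Nat.choose_le_choose m h)

-- induction lemma for small m
lemma choose_lb_small (n : ℕ) (hn : 9 ≤ n) :
    ∀ m : ℕ, 2 ≤ m → 4*m ≤ n → (n:ℝ)^2 * (8/3)^m ≤ 16 * n.choose m := by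
  intro m hm
  induction m, hm using Nat.le_induction with
  | base =>
    intro _
    have h2 : 2 * (n.choose 2) = n * (n-1) := by
      rw [Nat.choose_two_right, Nat.two_mul_div_two_of_even (Nat.even_mul_pred_self n)]
    have h2' : 2 * (n.choose 2 : ℝ) = (n:ℝ) * ((n:ℝ)-1) := by
      have : ((2 * n.choose 2 : ℕ):ℝ) = ((n * (n-1) : ℕ):ℝ) := by rw [h2]
      push_cast [Nat.cast_sub (show 1 ≤ n by omega)] at this
      linarith
    have hn' : (9:ℝ) ≤ n := by exact_mod_cast hn
    nlinarith
  | succ m hm ih =>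
    intro h4
    have h4m : 4*m ≤ n := by omega
    have hmn : m ≤ n := by omega
    have key : (n.choose (m+1) : ℝ) * ((m:ℝ)+1) = (n.choose m : ℝ) * ((n:ℝ) - m) := by
      have h := Nat.choose_succ_right_eq n m
      have hc : ((n.choose (m+1) * (m+1) : ℕ) : ℝ) = ((n.choose m * (n-m) : ℕ) : ℝ) := by rw [h]
      push_cast [Nat.cast_sub hmn] at hc
      linarith
    have hratio : (8/3 : ℝ) * (m+1) ≤ (n:ℝ) - m := by
      have h1 : (4:ℝ)*(m+1) ≤ n := by exact_mod_cast h4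
      nlinarith
    have hpos : (0:ℝ) < m + 1 := by positivity
    have hcpos : (0:ℝ) ≤ (n.choose m : ℝ) := Nat.cast_nonneg _
    have ihm := ih h4m
    have hp : (0:ℝ) < (8/3:ℝ)^m := by positivity
    have hstep : (n:ℝ)^2 * (8/3)^(m+1) * ((m:ℝ)+1) ≤ 16 * (n.choose (m+1) : ℝ) * ((m:ℝ)+1) := by
      calc (n:ℝ)^2 * (8/3)^(m+1) * ((m:ℝ)+1) = ((n:ℝ)^2 * (8/3)^m) * ((8/3) * ((m:ℝ)+1)) := by ring
        _ ≤ (16 * (n.choose m : ℝ)) * ((n:ℝ) - m) := by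
            apply mul_le_mul ihm hratio (by positivity) (by positivity)
        _ = 16 * ((n.choose m : ℝ) * ((n:ℝ) - m)) := by ring
        _ = 16 * ((n.choose (m+1) : ℝ) * ((m:ℝ)+1)) := by rw [← key]
        _ = 16 * (n.choose (m+1) : ℝ) * ((m:ℝ)+1) := by ring
    have := le_of_mul_le_mul_right hstep hpos
    calc (n:ℝ)^2 * (8/3)^(m+1) ≤ 16 * (n.choose (m+1) : ℝ) := this
      _ = 16 * (n.choose (m+1)) := by norm_cast

-- combined lower bound for all 2 ≤ m ≤ n/2
lemma choose_lb (n m : ℕ) (hn : 164 ≤ n) (hm : 2 ≤ m) (h2 : 2*m ≤ n) :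
    (n:ℝ)^2 * (8/3)^m ≤ 16 * n.choose m := by
  by_cases hc : 4*m ≤ n
  · exact choose_lb_small n (by omega) m hm hc
  · -- m > n/4, use central binomial bound
    push_neg at hc
    have hm41 : 41 ≤ m := by omega
    have h4 : (4:ℕ)^m ≤ n * n.choose m := four_pow_le m n (by omega) h2
    have h4' : (4:ℝ)^m ≤ n * n.choose m := by exact_mod_cast h4
    have hn0 : (0:ℝ) < n := by positivity
    have hcube : (n:ℝ)^3 ≤ (3/2)^m := by
      have h1 : (n:ℝ) ≤ 4*m := by exact_mod_cast hc.le
      calc (n:ℝ)^3 ≤ (4*(m:ℝ))^3 := by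
            apply pow_le_pow_left₀ hn0.le h1
        _ = 64 * (m:ℝ)^3 := by ring
        _ ≤ (3/2)^m := exp_beats_cube m (by omega)
    -- n^2 (8/3)^m ≤ 16 * 4^m / n  ⟸ n^3 (8/3)^m ≤ 16 * 4^m
    have key : (n:ℝ)^3 * (8/3)^m ≤ 16 * 4^m := by
      have h83 : (8/3:ℝ)^m * (3/2)^m = 4^m := by
        rw [← mul_pow]; norm_num
      calc (n:ℝ)^3 * (8/3)^m ≤ (3/2)^m * (8/3)^m := by
            apply mul_le_mul_of_nonneg_right hcube (by positivity)
        _ = 4^m := by rw [mul_comm, h83]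
        _ ≤ 16 * 4^m := by nlinarith [pow_pos (show (0:ℝ) < 4 by norm_num) m]
    have : (n:ℝ)^2 * (8/3)^m * n ≤ 16 * (n.choose m) * n := by
      calc (n:ℝ)^2 * (8/3)^m * n = (n:ℝ)^3 * (8/3)^m := by ring
        _ ≤ 16 * 4^m := key
        _ ≤ 16 * ((n:ℝ) * n.choose m) := by linarith
        _ = 16 * (n.choose m) * n := by ring
    exact le_of_mul_le_mul_right this hn0

-- per-term bound
lemma term_bound (n q : ℕ) (hn : 164 ≤ n) (hq : q ∈ Icc 2 (n-2)) :
    (2:ℝ)^(min q (n-q)) / (n.choose q) ≤ 16/(n:ℝ)^2 * ((3/4)^q + (3/4)^(n-q)) := by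
  rw [mem_Icc] at hq
  obtain ⟨hq2, hqn⟩ := hq
  set m := min q (n-q) with hm
  have hm2 : 2 ≤ m := by omega
  have hmn : 2*m ≤ n := by omega
  have hchoose : n.choose q = n.choose m := by
    rcases min_cases q (n-q) with ⟨h1, _⟩ | ⟨h1, h2⟩
    · rw [hm, h1]
    · rw [hm, h1, Nat.choose_symm (by omega)]
  have hcpos : (0:ℝ) < n.choose q := by
    rw [hchoose]
    exact_mod_cast Nat.choose_pos (by omega)
  have hlb := choose_lb n m hn hm2 hmn
  rw [hchoose] at hcpos ⊢
  have hn2 : (0:ℝ) < (n:ℝ)^2 := by positivity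
  have step1 : (2:ℝ)^m / (n.choose m) ≤ 16/(n:ℝ)^2 * (3/4)^m := by
    rw [div_le_iff₀ hcpos]
    have e : (16:ℝ)/(n:ℝ)^2 * (3/4)^m * ((n.choose m : ℝ)) * ((n:ℝ)^2 * (8/3)^m)
        = (16 * (n.choose m : ℝ)) * ((3/4:ℝ)^m * (8/3)^m) := by
      field_simp
    have h34 : (3/4:ℝ)^m * (8/3)^m = 2^m := by rw [← mul_pow]; norm_num
    have hpos : (0:ℝ) < (n:ℝ)^2 * (8/3)^m := by positivity
    rw [← mul_le_mul_iff_of_pos_right hpos, e, h34]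
    calc (2:ℝ)^m * ((n:ℝ)^2 * (8/3)^m) = ((n:ℝ)^2 * (8/3)^m) * (2:ℝ)^m := by ring
      _ ≤ (16 * (n.choose m : ℝ)) * (2:ℝ)^m := by
          apply mul_le_mul_of_nonneg_right hlb (by positivity)
  refine step1.trans ?_
  apply mul_le_mul_of_nonneg_left _ (by positivity)
  have hq' : (0:ℝ) ≤ (3/4:ℝ)^q := by positivity
  have hnq' : (0:ℝ) ≤ (3/4:ℝ)^(n-q) := by positivity
  rcases min_cases q (n-q) with ⟨h1, _⟩ | ⟨h1, _⟩ <;> rw [hm, h1] <;> linarith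

lemma geom_bound (k : ℕ) : ∑ i ∈ range k, (3/4:ℝ)^i ≤ 4 := by
  have := geom_sum_eq (show (3/4:ℝ) ≠ 1 by norm_num) k
  rw [this]
  have h1 : (0:ℝ) ≤ (3/4:ℝ)^k := by positivity
  have h2 : (3/4:ℝ)^k ≤ 1 := pow_le_one₀ (by norm_num) (by norm_num)
  rw [div_le_iff_of_neg (by norm_num : (3/4:ℝ) - 1 < 0)]
  linarith

theorem alpha_asymptotic :
    Filter.Tendsto (fun n : ℕ => (n : ℝ) * alpha n) Filter.atTop (nhds 4) := by
  have key : ∀ n : ℕ, 164 ≤ n → 4 ≤ (n:ℝ) * alpha n ∧ (n:ℝ) * alpha n ≤ 4 + 128/n := by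
    intro n hn
    have hn0 : (0:ℝ) < n := by positivity
    have hset : Finset.Icc 1 (n-1) = insert 1 (insert (n-1) (Finset.Icc 2 (n-2))) := by
      ext a; simp only [Finset.mem_Icc, Finset.mem_insert]; omega
    have h1ne : (1:ℕ) ∉ insert (n-1) (Finset.Icc 2 (n-2)) := by
      simp only [Finset.mem_insert, Finset.mem_Icc]; omega
    have h2ne : (n-1) ∉ Finset.Icc 2 (n-2) := by simp only [Finset.mem_Icc]; omega
    have hf1 : (2:ℝ)^(min 1 (n-1)) / (n.choose 1 : ℝ) = 2/n := by
      rw [min_eq_left (by omega), Nat.choose_one_right]; norm_num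
    have hfn1 : (2:ℝ)^(min (n-1) (n-(n-1))) / (n.choose (n-1) : ℝ) = 2/n := by
      have e1 : n - (n-1) = 1 := by omega
      have e2 : n.choose (n-1) = n := by
        have h := Nat.choose_symm (show 1 ≤ n by omega)
        rwa [Nat.choose_one_right] at h
      rw [e1, min_eq_right (by omega), e2]; norm_num
    set S := ∑ q ∈ Finset.Icc 2 (n-2), (2:ℝ)^(min q (n-q)) / (n.choose q : ℝ) with hS
    have halpha : alpha n = 2/n + (2/n + S) := by
      rw [alpha, hset, Finset.sum_insert h1ne, Finset.sum_insert h2ne, hf1, hfn1]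
    have hS0 : 0 ≤ S := Finset.sum_nonneg fun q _ => by positivity
    have hsub : Finset.Icc 2 (n-2) ⊆ Finset.range (n-1) := by
      intro a ha; simp only [Finset.mem_Icc] at ha; simp only [Finset.mem_range]; omega
    have hsum1 : ∑ q ∈ Finset.Icc 2 (n-2), (3/4:ℝ)^q ≤ 4 := by
      calc ∑ q ∈ Finset.Icc 2 (n-2), (3/4:ℝ)^q
          ≤ ∑ q ∈ Finset.range (n-1), (3/4:ℝ)^q :=
            Finset.sum_le_sum_of_subset_of_nonneg hsub (fun i _ _ => by positivity)
        _ ≤ 4 := geom_bound _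
    have hflip : ∑ q ∈ Finset.Icc 2 (n-2), (3/4:ℝ)^(n-q)
        = ∑ q ∈ Finset.Icc 2 (n-2), (3/4:ℝ)^q := by
      apply Finset.sum_nbij' (fun q => n - q) (fun q => n - q)
      · intro a ha; simp only [Finset.mem_Icc] at ha ⊢; omega
      · intro a ha; simp only [Finset.mem_Icc] at ha ⊢; omega
      · intro a ha; simp only [Finset.mem_Icc] at ha; omega
      · intro a ha; simp only [Finset.mem_Icc] at ha; omega
      · intro a ha; rfl
    have hSle : S ≤ 16/(n:ℝ)^2 * 8 := by
      calc S ≤ ∑ q ∈ Finset.Icc 2 (n-2), 16/(n:ℝ)^2 * ((3/4)^q + (3/4)^(n-q)) :=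
            Finset.sum_le_sum fun q hq => term_bound n q hn hq
        _ = 16/(n:ℝ)^2 * (∑ q ∈ Finset.Icc 2 (n-2), (3/4:ℝ)^q
              + ∑ q ∈ Finset.Icc 2 (n-2), (3/4:ℝ)^(n-q)) := by
            rw [← Finset.mul_sum, Finset.sum_add_distrib]
        _ ≤ 16/(n:ℝ)^2 * (4 + 4) := by
            apply mul_le_mul_of_nonneg_left _ (by positivity)
            rw [hflip]; linarith
        _ = 16/(n:ℝ)^2 * 8 := by norm_num
    have heq : (n:ℝ) * alpha n = 4 + (n:ℝ) * S := by
      rw [halpha]; field_simp; ring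
    constructor
    · rw [heq]; nlinarith
    · rw [heq]
      have : (n:ℝ) * S ≤ (n:ℝ) * (16/(n:ℝ)^2 * 8) :=
        mul_le_mul_of_nonneg_left hSle hn0.le
      have e : (n:ℝ) * (16/(n:ℝ)^2 * 8) = 128/n := by field_simp; ring
      rw [e] at this
      linarith
  have hupper : Filter.Tendsto (fun n : ℕ => (4:ℝ) + 128/n) Filter.atTop (nhds 4) := by
    have h0 : Filter.Tendsto (fun n : ℕ => (128:ℝ)*(1/n)) Filter.atTop (nhds (128*0)) :=
      tendsto_one_div_atTop_nhds_zero_nat.const_mul 128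
    have h1 : Filter.Tendsto (fun n : ℕ => (4:ℝ) + 128*(1/n)) Filter.atTop (nhds (4 + 128*0)) :=
      tendsto_const_nhds.add h0
    simpa [mul_one_div, div_eq_mul_inv] using h1
  refine tendsto_of_tendsto_of_tendsto_of_le_of_le' tendsto_const_nhds hupper ?_ ?_
  · filter_upwards [Filter.eventually_ge_atTop 164] with n hn
    exact (key n hn).1
  · filter_upwards [Filter.eventually_ge_atTop 164] with n hn
    exact (key n hn).2
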